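/- Let m ≥ 1 and d ≥ 1, let r be a designated element of Fin (2*m), and define S : Finset (Fin (2*m)) → ℝ by S X = (min |X| (2*m − |X|)) · Real.log d (the entropy profile of an AME(2m,d) state). Then for every A ⊆ Fin (2*m) with r ∉ A: if |A| ≥ m then S {r} + S A − S (A ∪ {r}) = 2 · Real.log d, and if |A| ≤ m−1 then S {r} + S A − S (A ∪ {r}) = 0. (This is the direction of Theorem 3 asserting that an AME(2m,d) state, with one party viewed as the reference system, satisfies the mutual-information conditions of an ((m, 2m−1)) threshold quantum secret sharing scheme with share and secret dimension d.) -/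

import Mathlib

/-- **AME states give threshold QSS schemes (entropy content).**
An AME(2m,d) state has entropy profile `S X = min(|X|, 2m−|X|) · log d`.  Viewing one
party `r` as the reference system, the mutual information `I(r:A) = S(r)+S(A)−S(A∪{r})`
equals `2 log d` for every set `A` of at least `m` of the other parties (authorized
sets can recover the secret), and `0` for every set of at most `m−1` of the other
parties (unauthorized sets have no information).  These are exactly the conditions
of an `((m, 2m−1))` threshold QSS scheme with share and secret dimension `d`. -/
theorem AME_is_qss (m d : ℕ) (hm : 1 ≤ m) (hd : 1 ≤ d) (r : Fin (2 * m))
    (S : Finset (Fin (2 * m)) → ℝ)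
    (hS : ∀ X : Finset (Fin (2 * m)),
      S X = ((min X.card (2 * m - X.card) : ℕ) : ℝ) * Real.log d) :
    ∀ A : Finset (Fin (2 * m)), r ∉ A →
      (m ≤ A.card → S {r} + S A - S (A ∪ {r}) = 2 * Real.log d) ∧
      (A.card ≤ m - 1 → S {r} + S A - S (A ∪ {r}) = 0) := by
  intro A hr
  have hU : (A ∪ {r}).card = A.card + 1 := by
    rw [Finset.card_union_of_disjoint (by simpa using hr)]
    simp
  have h2m : A.card + 1 ≤ 2 * m := by
    have := Finset.card_le_univ (A ∪ {r})
    rw [hU] at this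
    simpa [Finset.card_univ] using this
  constructor
  · intro h
    rw [hS, hS, hS, hU, Finset.card_singleton]
    have e1 : min 1 (2*m-1) = 1 := by omega
    have e2 : min A.card (2*m - A.card) = 2*m - A.card := by omega
    have e3 : min (A.card+1) (2*m - (A.card+1)) = 2*m - (A.card+1) := by omega
    rw [e1, e2, e3]
    have e4 : (2*m - A.card) = (2*m - (A.card+1)) + 1 := by omega
    rw [e4]; push_cast; ring
  · intro h
    rw [hS, hS, hS, hU, Finset.card_singleton]
    have e1 : min 1 (2*m-1) = 1 := by omega
    have e2 : min A.card (2*m - A.card) = A.card := by omega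
    have e3 : min (A.card+1) (2*m - (A.card+1)) = A.card+1 := by omega
    rw [e1, e2, e3]; push_cast; ring
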